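/- For every integer n ≥ 3, ω(n) < 1.3841 · log n / log log n, where ω(n) is the number of distinct prime divisors of n. -/

import Mathlib

open Real Finset


private lemma log_lb (x : ℝ) (p q : ℕ) (hq : 0 < q) (hx : 0 < x)
    (h : (2.7182818286 : ℝ) ^ p ≤ x ^ q) : (p : ℝ) / q ≤ Real.log x := by
  rw [div_le_iff₀ (by exact_mod_cast hq)]
  have he : (1:ℝ) ≤ Real.log 2.7182818286 := by
    rw [Real.le_log_iff_exp_le (by norm_num)]
    exact Real.exp_one_lt_d9.le
  have h1 : (p:ℝ) ≤ Real.log (x ^ q) := by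
    calc (p:ℝ) = p * 1 := by ring
    _ ≤ p * Real.log 2.7182818286 := by
        have : (0:ℝ) ≤ p := by positivity
        nlinarith
    _ = Real.log ((2.7182818286:ℝ) ^ p) := by rw [Real.log_pow]
    _ ≤ Real.log (x ^ q) := Real.log_le_log (by positivity) h
  rw [Real.log_pow] at h1
  calc (p:ℝ) ≤ q * Real.log x := h1
  _ = Real.log x * q := by ring

private lemma log_ub (x : ℝ) (p q : ℕ) (hq : 0 < q) (hx : 0 < x)
    (h : x ^ q ≤ (2.7182818283 : ℝ) ^ p) : Real.log x ≤ (p : ℝ) / q := by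
  rw [le_div_iff₀ (by exact_mod_cast hq)]
  have he : Real.log 2.7182818283 ≤ 1 := by
    rw [Real.log_le_iff_le_exp (by norm_num)]
    exact Real.exp_one_gt_d9.le
  have h1 : Real.log (x ^ q) ≤ (p:ℝ) := by
    calc Real.log (x ^ q) ≤ Real.log ((2.7182818283:ℝ) ^ p) := Real.log_le_log (by positivity) h
    _ = p * Real.log 2.7182818283 := by rw [Real.log_pow]
    _ ≤ p * 1 := by
        have : (0:ℝ) ≤ p := by positivity
        nlinarith
    _ = p := by ring
  rw [Real.log_pow] at h1
  linarith

private lemma pow_split (x : ℝ) (n : ℕ) : x ^ n = (x ^ 128) ^ (n / 128) * x ^ (n % 128) := by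
  rw [← pow_mul, ← pow_add, Nat.div_add_mod]

-- the general certificate lemma
private lemma cert (x a b K : ℝ) (hK0 : 0 ≤ K) (ha : Real.exp 1 ≤ a)
    (hax : a ≤ Real.log x) (hb : Real.log a ≤ b) (hK : K * b < 1.3841 * a) :
    K < 1.3841 * Real.log x / Real.log (Real.log x) := by
  set t := Real.log x with htdef
  have ha0 : 0 < a := lt_of_lt_of_le (Real.exp_pos 1) ha
  have hla : 1 ≤ Real.log a := (Real.le_log_iff_exp_le ha0).2 ha
  have hat : Real.exp 1 ≤ t := le_trans ha hax
  have ht0 : 0 < t := lt_of_lt_of_le (Real.exp_pos 1) hat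
  have hlt : 1 ≤ Real.log t := (Real.le_log_iff_exp_le ht0).2 hat
  have anti := Real.log_div_self_antitoneOn (by exact ha) (by exact hat) hax
  simp only at anti
  -- anti : log t / t ≤ log a / a
  have key : Real.log t * a ≤ Real.log a * t := by
    rw [div_le_div_iff₀ ht0 ha0] at anti; linarith
  rw [lt_div_iff₀ (by linarith)]
  -- goal : K * log t < 1.3841 * t
  have hba : Real.log a ≤ b := hb
  have h2 : K * Real.log t * a ≤ K * (Real.log a * t) := by
    have := mul_le_mul_of_nonneg_left key hK0
    linarith [this]
  have h3 : K * (Real.log a * t) ≤ K * b * t := by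
    have : K * Real.log a ≤ K * b := mul_le_mul_of_nonneg_left hba hK0
    nlinarith
  have h4 : K * b * t < 1.3841 * a * t := by
    have := mul_lt_mul_of_pos_right hK ht0
    linarith
  have h5 : K * Real.log t * a < 1.3841 * a * t := by linarith
  have := (mul_lt_mul_iff_of_pos_right ha0).mp (by linarith [h5] : (K * Real.log t) * a < (1.3841 * t) * a)
  linarith


private def sp : List ℕ := [2,3,5,7,11,13,17,19,23,29,31,37,41,43,47,53,59,61,67,71,73,79,83,89,97,101,103,107,109,113]

private def c (j : ℕ) : ℕ := if j < 30 then sp.getD j 0 else 3 * j - 2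

private def V : ℕ → ℕ
  | 0 => 1
  | k + 1 => V k * c k

private lemma c_pos (j : ℕ) : 0 < c j := by
  rw [c]
  split
  · rename_i h
    interval_cases j <;> decide
  · omega

private lemma V_pos (k : ℕ) : 0 < V k := by
  induction k with
  | zero => decide
  | succ k ih => exact Nat.mul_pos ih (c_pos k)

private lemma count_small : ∀ j < 30, ((Finset.range (c j)).filter Nat.Prime).card ≤ j := by
  decide

private lemma prime_cases {p : ℕ} (hpp : p.Prime) :
    p = 2 ∨ p = 3 ∨ (5 ≤ p ∧ p % 2 = 1 ∧ p % 3 ≠ 0) := by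
  by_cases h2 : p = 2
  · exact Or.inl h2
  by_cases h3 : p = 3
  · exact Or.inr (Or.inl h3)
  refine Or.inr (Or.inr ⟨?_, ?_, ?_⟩)
  · have := hpp.two_le
    have h4 : p ≠ 4 := by rintro rfl; norm_num at hpp
    omega
  · rcases hpp.eq_two_or_odd' with h' | h'
    · exact absurd h' h2
    · rcases h' with ⟨m, hm⟩; omega
  · intro hdvd
    exact h3 ((Nat.prime_dvd_prime_iff_eq Nat.prime_three hpp).mp
      (Nat.dvd_of_mod_eq_zero hdvd)).symm

private lemma count_le (j : ℕ) (hj : 2 ≤ j) :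
    ((Finset.range (c j)).filter Nat.Prime).card ≤ j := by
  by_cases hsm : j < 30
  · exact count_small j hsm
  have hc : c j = 3 * j - 2 := by rw [c, if_neg hsm]
  rw [hc]
  have : ((Finset.range (3 * j - 2)).filter Nat.Prime).card ≤ (Finset.range j).card := by
    apply Finset.card_le_card_of_injOn (fun p => if p = 2 then 0 else if p = 3 then j - 1 else p / 3)
    · intro p hp
      simp only [Finset.mem_coe, Finset.mem_filter, Finset.mem_range] at hp ⊢
      obtain ⟨hlt, hpp⟩ := hp
      have := prime_cases hpp
      split_ifs <;> omega
    · intro p hp q hq hfeq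
      simp only [Finset.coe_filter, Finset.mem_range, Set.mem_setOf_eq] at hp hq
      obtain ⟨hplt, hpp⟩ := hp
      obtain ⟨hqlt, hqp⟩ := hq
      have hcp := prime_cases hpp
      have hcq := prime_cases hqp
      dsimp only at hfeq
      split_ifs at hfeq <;> omega
  simpa using this

private lemma V_le_prod : ∀ (k : ℕ) (S : Finset ℕ), S.card = k → (∀ p ∈ S, p.Prime) →
    V k ≤ ∏ p ∈ S, p := by
  intro k
  induction k with
  | zero =>
    intro S hcard _
    simp [Finset.card_eq_zero.mp hcard, V]
  | succ k ih =>
    intro S hcard hprime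
    have hne : S.Nonempty := Finset.card_pos.mp (by omega)
    set M := S.max' hne with hM
    have hMS : M ∈ S := S.max'_mem hne
    have hcard' : (S.erase M).card = k := by
      rw [Finset.card_erase_of_mem hMS]; omega
    have hMp : ∀ p ∈ S.erase M, p.Prime := fun p hp => hprime p (Finset.mem_of_mem_erase hp)
    have ihS := ih (S.erase M) hcard' hMp
    have hMc : c k ≤ M := by
      by_contra hlt
      push_neg at hlt
      have hsub : S ⊆ (Finset.range (c k)).filter Nat.Prime := by
        intro p hp
        simp only [Finset.mem_filter, Finset.mem_range]
        exact ⟨lt_of_le_of_lt (S.le_max' p hp) hlt, hprime p hp⟩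
      have h1 : S.card ≤ ((Finset.range (c k)).filter Nat.Prime).card := Finset.card_le_card hsub
      have h2 : ((Finset.range (c k)).filter Nat.Prime).card ≤ k := by
        rcases Nat.lt_or_ge k 2 with h | h
        · interval_cases k <;> decide
        · exact count_le k h
      omega
    calc V (k+1) = V k * c k := rfl
    _ ≤ (∏ p ∈ S.erase M, p) * M := Nat.mul_le_mul ihS hMc
    _ = M * ∏ p ∈ S.erase M, p := Nat.mul_comm _ _
    _ = ∏ p ∈ S, p := Finset.mul_prod_erase S (fun p => p) hMS


private lemma c_eq (j : ℕ) (h : 30 ≤ j) : c j = 3 * j - 2 := by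
  rw [c, if_neg (by omega)]

private lemma V30eq : V 30 = 31610054640417607788145206291543662493274686990 := by decide

-- test tail_sum
private lemma tail_sum : ∀ k : ℕ, 30 ≤ k →
    ((k:ℝ)-2) * Real.log ((k:ℝ)-2) - ((k:ℝ)-2) + 1 - 6631/100 ≤
      ∑ j ∈ (Finset.Ico 30 k : Finset ℕ), Real.log ((j:ℝ)-1) := by
  intro k hk
  induction k, hk using Nat.le_induction with
  | base =>
    simp only [Finset.Ico_self, Finset.sum_empty]
    have h28 : Real.log 28 ≤ 993/298 := by
      have := log_ub 28 993 298 (by norm_num) (by norm_num) (by rw [pow_split _ 993, pow_split _ 298]; norm_num)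
      simpa using this
    norm_num
    nlinarith [h28]
  | succ k hk ih =>
    rw [Finset.sum_Ico_succ_top (by omega : 30 ≤ k)]
    have hm : (28:ℝ) ≤ (k:ℝ) - 2 := by
      have : (30:ℝ) ≤ (k:ℝ) := by exact_mod_cast hk
      linarith
    set m : ℝ := (k:ℝ) - 2 with hmdef
    have hm0 : (0:ℝ) < m := by linarith
    have hstep : Real.log (m+1) - Real.log m ≤ 1/m := by
      have h1 : Real.log ((m+1)/m) ≤ (m+1)/m - 1 := Real.log_le_sub_one_of_pos (by positivity)
      rw [Real.log_div (by linarith) (by linarith)] at h1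
      have : (m+1)/m - 1 = 1/m := by field_simp; ring
      linarith [h1, this.le]
    have hcast : ((k:ℝ)+1) - 2 = m + 1 := by rw [hmdef]; ring
    push_cast
    rw [hcast]
    have hlogm1 : Real.log ((k:ℝ) - 1) = Real.log (m+1) := by rw [hmdef]; ring_nf
    rw [hlogm1]
    have hp : m * (Real.log (m+1) - Real.log m) ≤ m * (1/m) :=
      mul_le_mul_of_nonneg_left hstep hm0.le
    have hmm : m * (1/m) = 1 := by field_simp
    nlinarith [ih, hp, hmm]


private lemma logV (k : ℕ) : Real.log (V k) = ∑ j ∈ Finset.range k, Real.log (c j) := by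
  induction k with
  | zero =>
    simp [V]
  | succ k ih =>
    rw [show V (k+1) = V k * c k from rfl, Finset.sum_range_succ, ← ih]
    push_cast
    rw [Real.log_mul (by exact_mod_cast (V_pos k).ne') (by exact_mod_cast (c_pos k).ne')]

private lemma log3_lb : (5493/5000 : ℝ) ≤ Real.log 3 := by
  have := log_lb 3 5493 5000 (by norm_num) (by norm_num) (by rw [pow_split _ 5493, pow_split _ 5000]; norm_num)
  simpa using this

set_option maxHeartbeats 2000000 in
private lemma tail_lemma (n k : ℕ) (hk : 30 ≤ k) (hVn : V k ≤ n) :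
    (k:ℝ) < 1.3841 * Real.log n / Real.log (Real.log n) := by
  have hm : (28:ℝ) ≤ (k:ℝ) - 2 := by
    have : (30:ℝ) ≤ (k:ℝ) := by exact_mod_cast hk
    linarith
  set m : ℝ := (k:ℝ) - 2 with hmdef
  set l : ℝ := Real.log m with hldef
  have hl : (333/100 : ℝ) ≤ l := by
    have h1 : (333/100 : ℝ) ≤ Real.log 28 := by
      have := log_lb 28 333 100 (by norm_num) (by norm_num) (by rw [pow_split _ 333]; norm_num)
      simpa using this
    exact le_trans h1 (Real.log_le_log (by norm_num) hm)
  -- lower bound on log (V k)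
  have hsum : Real.log (V k) = (∑ j ∈ Finset.range 30, Real.log (c j)) +
      ∑ j ∈ (Finset.Ico 30 k : Finset ℕ), Real.log (c j) := by
    rw [logV, Finset.range_eq_Ico, ← Finset.sum_Ico_consecutive _ (by omega : (0:ℕ) ≤ 30) hk,
      ← Finset.range_eq_Ico]
  have h30 : (1606/15 : ℝ) ≤ ∑ j ∈ Finset.range 30, Real.log (c j) := by
    rw [← logV, V30eq]
    have := log_lb 31610054640417607788145206291543662493274686990 1606 15
      (by norm_num) (by norm_num) (by rw [pow_split _ 1606]; norm_num)
    simpa using this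
  have hterm : ∀ j ∈ (Finset.Ico 30 k : Finset ℕ),
      (5493/5000 : ℝ) + Real.log ((j:ℝ)-1) ≤ Real.log (c j) := by
    intro j hj
    simp only [Finset.mem_Ico] at hj
    have hj30 : 30 ≤ j := hj.1
    rw [c_eq j hj30]
    have hcast : ((3*j-2 : ℕ) : ℝ) = 3*(j:ℝ) - 2 := by
      have : 2 ≤ 3*j := by omega
      push_cast [this]
      ring
    rw [hcast]
    have hj1 : (30:ℝ) ≤ (j:ℝ) := by exact_mod_cast hj30
    have hlog3 : Real.log (3*((j:ℝ)-1)) = Real.log 3 + Real.log ((j:ℝ)-1) := by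
      rw [Real.log_mul (by norm_num) (by linarith)]
    have hmono : Real.log (3*((j:ℝ)-1)) ≤ Real.log (3*(j:ℝ)-2) :=
      Real.log_le_log (by linarith) (by linarith)
    linarith [log3_lb]
  have hsum2 : ((k:ℝ)-30) * (5493/5000) + ∑ j ∈ (Finset.Ico 30 k : Finset ℕ), Real.log ((j:ℝ)-1)
      ≤ ∑ j ∈ (Finset.Ico 30 k : Finset ℕ), Real.log (c j) := by
    have := Finset.sum_le_sum hterm
    rw [Finset.sum_add_distrib, Finset.sum_const, Nat.card_Ico] at this
    have hcast : ((k - 30 : ℕ) : ℝ) = (k:ℝ) - 30 := by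
      push_cast [hk]
      ring
    rw [nsmul_eq_mul, hcast] at this
    exact this
  -- assemble lower bound E ≤ log n
  have hVk : Real.log (V k) ≤ Real.log n := by
    apply Real.log_le_log (by exact_mod_cast V_pos k)
    exact_mod_cast hVn
  have hts := tail_sum k hk
  have hE : m * (l + 493/5000) + 82469/7500 ≤ Real.log n := by
    have e1 : ((k:ℝ)-2) * Real.log ((k:ℝ)-2) = m * l := by rw [← hmdef, ← hldef]
    rw [e1, ← hmdef] at hts
    have : (k:ℝ) - 30 = m - 28 := by rw [hmdef]; ring
    rw [this] at hsum2
    have := le_trans (by linarith [h30, hsum2, hts] :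
      m * (l + 493/5000) + 82469/7500 ≤ Real.log (V k)) hVk
    linarith
  -- apply cert
  set E : ℝ := m * (l + 493/5000) + 82469/7500 with hEdef
  have hml : (28:ℝ) * (333/100) ≤ m * (l + 493/5000) :=
    mul_le_mul hm (by linarith) (by norm_num) (by linarith)
  have hE0 : (0:ℝ) < E := by rw [hEdef]; nlinarith
  have hlogE : Real.log E ≤ 5/4 * l + 82139/153846 := by
    set X : ℝ := l + 493/5000 + 82469/210000 with hXdef
    have hEX : E ≤ m * X := by
      rw [hEdef, hXdef]
      nlinarith
    have hX0 : (0:ℝ) < X := by nlinarith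
    have h1 : Real.log E ≤ Real.log (m * X) := Real.log_le_log hE0 hEX
    have h2 : Real.log (m * X) = l + Real.log X := by
      rw [Real.log_mul (by nlinarith) (by nlinarith), ← hldef]
    -- log X ≤ log l + (X - l)/l
    have hl0 : (0:ℝ) < l := by linarith
    have h3 : Real.log (X/l) ≤ X/l - 1 := Real.log_le_sub_one_of_pos (by positivity)
    have h4 : Real.log (X/l) = Real.log X - Real.log l := Real.log_div (by nlinarith) (by linarith)
    have h5 : X/l - 1 = (493/5000 + 82469/210000)/l := by
      rw [hXdef]; field_simp; ring
    have h6 : ((493:ℝ)/5000 + 82469/210000)/l ≤ (493/5000 + 82469/210000)/(333/100) :=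
      div_le_div_of_nonneg_left (by norm_num) (by norm_num) hl
    -- log l ≤ l/4 - 1 + 61/44
    have h7 : Real.log (l/4) ≤ l/4 - 1 := Real.log_le_sub_one_of_pos (by positivity)
    have h8 : Real.log (l/4) = Real.log l - Real.log 4 := Real.log_div (by linarith) (by norm_num)
    have h9 : Real.log 4 ≤ 61/44 := by
      have := log_ub 4 61 44 (by norm_num) (by norm_num) (by norm_num)
      simpa using this
    have h10 : Real.log l ≤ l/4 - 1 + 61/44 := by linarith
    have : Real.log X ≤ Real.log l + (493/5000 + 82469/210000)/(333/100) := by linarith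
    calc Real.log E ≤ l + Real.log X := by linarith
    _ ≤ l + (l/4 - 1 + 61/44) + (493/5000 + 82469/210000)/(333/100) := by linarith
    _ = 5/4 * l + 82139/153846 := by ring_nf
  have hexpE : Real.exp 1 ≤ E := by
    have he : Real.exp 1 < 2.7182818286 := Real.exp_one_lt_d9
    rw [hEdef]
    nlinarith [hml]
  have hK : (k:ℝ) * (5/4 * l + 82139/153846) < 1.3841 * E := by
    have hkm : (k:ℝ) = m + 2 := by rw [hmdef]; ring
    rw [hkm, hEdef]
    nlinarith [mul_nonneg (by linarith : (0:ℝ) ≤ m - 28) (by linarith : (0:ℝ) ≤ l - 333/100)]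
  exact cert n E (5/4 * l + 82139/153846) k (by positivity) hexpE hE hlogE hK

private lemma certM4 (n : ℕ) (h : V 4 ≤ n) :
    (4:ℝ) < 1.3841 * Real.log n / Real.log (Real.log n) := by
  have hVk : V 4 = 210 := by decide
  have hn : ((210:ℕ):ℝ) ≤ (n:ℝ) := by exact_mod_cast hVk ▸ h
  have h1 := log_lb 210 16 3 (by norm_num) (by norm_num) (by norm_num)
  have h2 : Real.log ((210:ℕ):ℝ) ≤ Real.log n :=
    Real.log_le_log (by norm_num) hn
  have hlog : ((16:ℝ)/3) ≤ Real.log n := by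
    refine le_trans ?_ h2
    exact_mod_cast h1
  have hb : Real.log ((16:ℝ)/3) ≤ ((32:ℝ)/19) := by
    have := log_ub ((16:ℝ)/3) 32 19 (by norm_num) (by norm_num) (by norm_num)
    exact_mod_cast this
  exact cert n ((16:ℝ)/3) ((32:ℝ)/19) 4 (by norm_num)
    (le_trans Real.exp_one_lt_d9.le (by norm_num)) hlog hb (by norm_num)

private lemma certM5 (n : ℕ) (h : V 5 ≤ n) :
    (5:ℝ) < 1.3841 * Real.log n / Real.log (Real.log n) := by
  have hVk : V 5 = 2310 := by decide
  have hn : ((2310:ℕ):ℝ) ≤ (n:ℝ) := by exact_mod_cast hVk ▸ h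
  have h1 := log_lb 2310 147 19 (by norm_num) (by norm_num) (by norm_num)
  have h2 : Real.log ((2310:ℕ):ℝ) ≤ Real.log n :=
    Real.log_le_log (by norm_num) hn
  have hlog : ((147:ℝ)/19) ≤ Real.log n := by
    refine le_trans ?_ h2
    exact_mod_cast h1
  have hb : Real.log ((147:ℝ)/19) ≤ ((41:ℝ)/20) := by
    have := log_ub ((147:ℝ)/19) 41 20 (by norm_num) (by norm_num) (by norm_num)
    exact_mod_cast this
  exact cert n ((147:ℝ)/19) ((41:ℝ)/20) 5 (by norm_num)
    (le_trans Real.exp_one_lt_d9.le (by norm_num)) hlog hb (by norm_num)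

private lemma certM6 (n : ℕ) (h : V 6 ≤ n) :
    (6:ℝ) < 1.3841 * Real.log n / Real.log (Real.log n) := by
  have hVk : V 6 = 30030 := by decide
  have hn : ((30030:ℕ):ℝ) ≤ (n:ℝ) := by exact_mod_cast hVk ▸ h
  have h1 := log_lb 30030 134 13 (by norm_num) (by norm_num) (by norm_num)
  have h2 : Real.log ((30030:ℕ):ℝ) ≤ Real.log n :=
    Real.log_le_log (by norm_num) hn
  have hlog : ((134:ℝ)/13) ≤ Real.log n := by
    refine le_trans ?_ h2
    exact_mod_cast h1
  have hb : Real.log ((134:ℝ)/13) ≤ ((7:ℝ)/3) := by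
    have := log_ub ((134:ℝ)/13) 7 3 (by norm_num) (by norm_num) (by norm_num)
    exact_mod_cast this
  exact cert n ((134:ℝ)/13) ((7:ℝ)/3) 6 (by norm_num)
    (le_trans Real.exp_one_lt_d9.le (by norm_num)) hlog hb (by norm_num)

private lemma certM7 (n : ℕ) (h : V 7 ≤ n) :
    (7:ℝ) < 1.3841 * Real.log n / Real.log (Real.log n) := by
  have hVk : V 7 = 510510 := by decide
  have hn : ((510510:ℕ):ℝ) ≤ (n:ℝ) := by exact_mod_cast hVk ▸ h
  have h1 := log_lb 510510 92 7 (by norm_num) (by norm_num) (by norm_num)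
  have h2 : Real.log ((510510:ℕ):ℝ) ≤ Real.log n :=
    Real.log_le_log (by norm_num) hn
  have hlog : ((92:ℝ)/7) ≤ Real.log n := by
    refine le_trans ?_ h2
    exact_mod_cast h1
  have hb : Real.log ((92:ℝ)/7) ≤ ((49:ℝ)/19) := by
    have := log_ub ((92:ℝ)/7) 49 19 (by norm_num) (by norm_num) (by norm_num)
    exact_mod_cast this
  exact cert n ((92:ℝ)/7) ((49:ℝ)/19) 7 (by norm_num)
    (le_trans Real.exp_one_lt_d9.le (by norm_num)) hlog hb (by norm_num)

private lemma certM8 (n : ℕ) (h : V 8 ≤ n) :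
    (8:ℝ) < 1.3841 * Real.log n / Real.log (Real.log n) := by
  have hVk : V 8 = 9699690 := by decide
  have hn : ((9699690:ℕ):ℝ) ≤ (n:ℝ) := by exact_mod_cast hVk ▸ h
  have h1 := log_lb 9699690 370 23 (by norm_num) (by norm_num) (by rw [pow_split _ 370]; norm_num)
  have h2 : Real.log ((9699690:ℕ):ℝ) ≤ Real.log n :=
    Real.log_le_log (by norm_num) hn
  have hlog : ((370:ℝ)/23) ≤ Real.log n := by
    refine le_trans ?_ h2
    exact_mod_cast h1
  have hb : Real.log ((370:ℝ)/23) ≤ ((164:ℝ)/59) := by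
    have := log_ub ((370:ℝ)/23) 164 59 (by norm_num) (by norm_num) (by norm_num)
    exact_mod_cast this
  exact cert n ((370:ℝ)/23) ((164:ℝ)/59) 8 (by norm_num)
    (le_trans Real.exp_one_lt_d9.le (by norm_num)) hlog hb (by norm_num)

private lemma certM9 (n : ℕ) (h : V 9 ≤ n) :
    (9:ℝ) < 1.3841 * Real.log n / Real.log (Real.log n) := by
  have hVk : V 9 = 223092870 := by decide
  have hn : ((223092870:ℕ):ℝ) ≤ (n:ℝ) := by exact_mod_cast hVk ▸ h
  have h1 := log_lb 223092870 2499 130 (by norm_num) (by norm_num) (by rw [pow_split _ 2499]; norm_num)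
  have h2 : Real.log ((223092870:ℕ):ℝ) ≤ Real.log n :=
    Real.log_le_log (by norm_num) hn
  have hlog : ((2499:ℝ)/130) ≤ Real.log n := by
    refine le_trans ?_ h2
    exact_mod_cast h1
  have hb : Real.log ((2499:ℝ)/130) ≤ ((337:ℝ)/114) := by
    have := log_ub ((2499:ℝ)/130) 337 114 (by norm_num) (by norm_num) (by rw [pow_split _ 337]; norm_num)
    exact_mod_cast this
  exact cert n ((2499:ℝ)/130) ((337:ℝ)/114) 9 (by norm_num)
    (le_trans Real.exp_one_lt_d9.le (by norm_num)) hlog hb (by norm_num)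

private lemma certM10 (n : ℕ) (h : V 10 ≤ n) :
    (10:ℝ) < 1.3841 * Real.log n / Real.log (Real.log n) := by
  have hVk : V 10 = 6469693230 := by decide
  have hn : ((6469693230:ℕ):ℝ) ≤ (n:ℝ) := by exact_mod_cast hVk ▸ h
  have h1 := log_lb 6469693230 384 17 (by norm_num) (by norm_num) (by rw [pow_split _ 384]; norm_num)
  have h2 : Real.log ((6469693230:ℕ):ℝ) ≤ Real.log n :=
    Real.log_le_log (by norm_num) hn
  have hlog : ((384:ℝ)/17) ≤ Real.log n := by
    refine le_trans ?_ h2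
    exact_mod_cast h1
  have hb : Real.log ((384:ℝ)/17) ≤ ((53:ℝ)/17) := by
    have := log_ub ((384:ℝ)/17) 53 17 (by norm_num) (by norm_num) (by norm_num)
    exact_mod_cast this
  exact cert n ((384:ℝ)/17) ((53:ℝ)/17) 10 (by norm_num)
    (le_trans Real.exp_one_lt_d9.le (by norm_num)) hlog hb (by norm_num)

private lemma certM11 (n : ℕ) (h : V 11 ≤ n) :
    (11:ℝ) < 1.3841 * Real.log n / Real.log (Real.log n) := by
  have hVk : V 11 = 200560490130 := by decide
  have hn : ((200560490130:ℕ):ℝ) ≤ (n:ℝ) := by exact_mod_cast hVk ▸ h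
  have h1 := log_lb 200560490130 26 1 (by norm_num) (by norm_num) (by norm_num)
  have h2 : Real.log ((200560490130:ℕ):ℝ) ≤ Real.log n :=
    Real.log_le_log (by norm_num) hn
  have hlog : ((26:ℝ)/1) ≤ Real.log n := by
    refine le_trans ?_ h2
    exact_mod_cast h1
  have hb : Real.log ((26:ℝ)/1) ≤ ((62:ℝ)/19) := by
    have := log_ub ((26:ℝ)/1) 62 19 (by norm_num) (by norm_num) (by norm_num)
    exact_mod_cast this
  exact cert n ((26:ℝ)/1) ((62:ℝ)/19) 11 (by norm_num)
    (le_trans Real.exp_one_lt_d9.le (by norm_num)) hlog hb (by norm_num)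

private lemma certM12 (n : ℕ) (h : V 12 ≤ n) :
    (12:ℝ) < 1.3841 * Real.log n / Real.log (Real.log n) := by
  have hVk : V 12 = 7420738134810 := by decide
  have hn : ((7420738134810:ℕ):ℝ) ≤ (n:ℝ) := by exact_mod_cast hVk ▸ h
  have h1 := log_lb 7420738134810 563 19 (by norm_num) (by norm_num) (by rw [pow_split _ 563]; norm_num)
  have h2 : Real.log ((7420738134810:ℕ):ℝ) ≤ Real.log n :=
    Real.log_le_log (by norm_num) hn
  have hlog : ((563:ℝ)/19) ≤ Real.log n := by
    refine le_trans ?_ h2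
    exact_mod_cast h1
  have hb : Real.log ((563:ℝ)/19) ≤ ((61:ℝ)/18) := by
    have := log_ub ((563:ℝ)/19) 61 18 (by norm_num) (by norm_num) (by norm_num)
    exact_mod_cast this
  exact cert n ((563:ℝ)/19) ((61:ℝ)/18) 12 (by norm_num)
    (le_trans Real.exp_one_lt_d9.le (by norm_num)) hlog hb (by norm_num)

private lemma certM13 (n : ℕ) (h : V 13 ≤ n) :
    (13:ℝ) < 1.3841 * Real.log n / Real.log (Real.log n) := by
  have hVk : V 13 = 304250263527210 := by decide
  have hn : ((304250263527210:ℕ):ℝ) ≤ (n:ℝ) := by exact_mod_cast hVk ▸ h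
  have h1 := log_lb 304250263527210 100 3 (by norm_num) (by norm_num) (by norm_num)
  have h2 : Real.log ((304250263527210:ℕ):ℝ) ≤ Real.log n :=
    Real.log_le_log (by norm_num) hn
  have hlog : ((100:ℝ)/3) ≤ Real.log n := by
    refine le_trans ?_ h2
    exact_mod_cast h1
  have hb : Real.log ((100:ℝ)/3) ≤ ((67:ℝ)/19) := by
    have := log_ub ((100:ℝ)/3) 67 19 (by norm_num) (by norm_num) (by norm_num)
    exact_mod_cast this
  exact cert n ((100:ℝ)/3) ((67:ℝ)/19) 13 (by norm_num)
    (le_trans Real.exp_one_lt_d9.le (by norm_num)) hlog hb (by norm_num)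

private lemma certM14 (n : ℕ) (h : V 14 ≤ n) :
    (14:ℝ) < 1.3841 * Real.log n / Real.log (Real.log n) := by
  have hVk : V 14 = 13082761331670030 := by decide
  have hn : ((13082761331670030:ℕ):ℝ) ≤ (n:ℝ) := by exact_mod_cast hVk ▸ h
  have h1 := log_lb 13082761331670030 705 19 (by norm_num) (by norm_num) (by rw [pow_split _ 705]; norm_num)
  have h2 : Real.log ((13082761331670030:ℕ):ℝ) ≤ Real.log n :=
    Real.log_le_log (by norm_num) hn
  have hlog : ((705:ℝ)/19) ≤ Real.log n := by
    refine le_trans ?_ h2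
    exact_mod_cast h1
  have hb : Real.log ((705:ℝ)/19) ≤ ((47:ℝ)/13) := by
    have := log_ub ((705:ℝ)/19) 47 13 (by norm_num) (by norm_num) (by norm_num)
    exact_mod_cast this
  exact cert n ((705:ℝ)/19) ((47:ℝ)/13) 14 (by norm_num)
    (le_trans Real.exp_one_lt_d9.le (by norm_num)) hlog hb (by norm_num)

private lemma certM15 (n : ℕ) (h : V 15 ≤ n) :
    (15:ℝ) < 1.3841 * Real.log n / Real.log (Real.log n) := by
  have hVk : V 15 = 614889782588491410 := by decide
  have hn : ((614889782588491410:ℕ):ℝ) ≤ (n:ℝ) := by exact_mod_cast hVk ▸ h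
  have h1 := log_lb 614889782588491410 819 20 (by norm_num) (by norm_num) (by rw [pow_split _ 819]; norm_num)
  have h2 : Real.log ((614889782588491410:ℕ):ℝ) ≤ Real.log n :=
    Real.log_le_log (by norm_num) hn
  have hlog : ((819:ℝ)/20) ≤ Real.log n := by
    refine le_trans ?_ h2
    exact_mod_cast h1
  have hb : Real.log ((819:ℝ)/20) ≤ ((26:ℝ)/7) := by
    have := log_ub ((819:ℝ)/20) 26 7 (by norm_num) (by norm_num) (by norm_num)
    exact_mod_cast this
  exact cert n ((819:ℝ)/20) ((26:ℝ)/7) 15 (by norm_num)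
    (le_trans Real.exp_one_lt_d9.le (by norm_num)) hlog hb (by norm_num)

private lemma certM16 (n : ℕ) (h : V 16 ≤ n) :
    (16:ℝ) < 1.3841 * Real.log n / Real.log (Real.log n) := by
  have hVk : V 16 = 32589158477190044730 := by decide
  have hn : ((32589158477190044730:ℕ):ℝ) ≤ (n:ℝ) := by exact_mod_cast hVk ▸ h
  have h1 := log_lb 32589158477190044730 629 14 (by norm_num) (by norm_num) (by rw [pow_split _ 629]; norm_num)
  have h2 : Real.log ((32589158477190044730:ℕ):ℝ) ≤ Real.log n :=
    Real.log_le_log (by norm_num) hn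
  have hlog : ((629:ℝ)/14) ≤ Real.log n := by
    refine le_trans ?_ h2
    exact_mod_cast h1
  have hb : Real.log ((629:ℝ)/14) ≤ ((61:ℝ)/16) := by
    have := log_ub ((629:ℝ)/14) 61 16 (by norm_num) (by norm_num) (by norm_num)
    exact_mod_cast this
  exact cert n ((629:ℝ)/14) ((61:ℝ)/16) 16 (by norm_num)
    (le_trans Real.exp_one_lt_d9.le (by norm_num)) hlog hb (by norm_num)

private lemma certM17 (n : ℕ) (h : V 17 ≤ n) :
    (17:ℝ) < 1.3841 * Real.log n / Real.log (Real.log n) := by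
  have hVk : V 17 = 1922760350154212639070 := by decide
  have hn : ((1922760350154212639070:ℕ):ℝ) ≤ (n:ℝ) := by exact_mod_cast hVk ▸ h
  have h1 := log_lb 1922760350154212639070 49 1 (by norm_num) (by norm_num) (by norm_num)
  have h2 : Real.log ((1922760350154212639070:ℕ):ℝ) ≤ Real.log n :=
    Real.log_le_log (by norm_num) hn
  have hlog : ((49:ℝ)/1) ≤ Real.log n := by
    refine le_trans ?_ h2
    exact_mod_cast h1
  have hb : Real.log ((49:ℝ)/1) ≤ ((74:ℝ)/19) := by
    have := log_ub ((49:ℝ)/1) 74 19 (by norm_num) (by norm_num) (by norm_num)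
    exact_mod_cast this
  exact cert n ((49:ℝ)/1) ((74:ℝ)/19) 17 (by norm_num)
    (le_trans Real.exp_one_lt_d9.le (by norm_num)) hlog hb (by norm_num)

private lemma certM18 (n : ℕ) (h : V 18 ≤ n) :
    (18:ℝ) < 1.3841 * Real.log n / Real.log (Real.log n) := by
  have hVk : V 18 = 117288381359406970983270 := by decide
  have hn : ((117288381359406970983270:ℕ):ℝ) ≤ (n:ℝ) := by exact_mod_cast hVk ▸ h
  have h1 := log_lb 117288381359406970983270 903 17 (by norm_num) (by norm_num) (by rw [pow_split _ 903]; norm_num)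
  have h2 : Real.log ((117288381359406970983270:ℕ):ℝ) ≤ Real.log n :=
    Real.log_le_log (by norm_num) hn
  have hlog : ((903:ℝ)/17) ≤ Real.log n := by
    refine le_trans ?_ h2
    exact_mod_cast h1
  have hb : Real.log ((903:ℝ)/17) ≤ ((4:ℝ)/1) := by
    have := log_ub ((903:ℝ)/17) 4 1 (by norm_num) (by norm_num) (by norm_num)
    exact_mod_cast this
  exact cert n ((903:ℝ)/17) ((4:ℝ)/1) 18 (by norm_num)
    (le_trans Real.exp_one_lt_d9.le (by norm_num)) hlog hb (by norm_num)

private lemma certM19 (n : ℕ) (h : V 19 ≤ n) :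
    (19:ℝ) < 1.3841 * Real.log n / Real.log (Real.log n) := by
  have hVk : V 19 = 7858321551080267055879090 := by decide
  have hn : ((7858321551080267055879090:ℕ):ℝ) ≤ (n:ℝ) := by exact_mod_cast hVk ▸ h
  have h1 := log_lb 7858321551080267055879090 1089 19 (by norm_num) (by norm_num) (by rw [pow_split _ 1089]; norm_num)
  have h2 : Real.log ((7858321551080267055879090:ℕ):ℝ) ≤ Real.log n :=
    Real.log_le_log (by norm_num) hn
  have hlog : ((1089:ℝ)/19) ≤ Real.log n := by
    refine le_trans ?_ h2
    exact_mod_cast h1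
  have hb : Real.log ((1089:ℝ)/19) ≤ ((81:ℝ)/20) := by
    have := log_ub ((1089:ℝ)/19) 81 20 (by norm_num) (by norm_num) (by norm_num)
    exact_mod_cast this
  exact cert n ((1089:ℝ)/19) ((81:ℝ)/20) 19 (by norm_num)
    (le_trans Real.exp_one_lt_d9.le (by norm_num)) hlog hb (by norm_num)

private lemma certM20 (n : ℕ) (h : V 20 ≤ n) :
    (20:ℝ) < 1.3841 * Real.log n / Real.log (Real.log n) := by
  have hVk : V 20 = 557940830126698960967415390 := by decide
  have hn : ((557940830126698960967415390:ℕ):ℝ) ≤ (n:ℝ) := by exact_mod_cast hVk ▸ h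
  have h1 := log_lb 557940830126698960967415390 739 12 (by norm_num) (by norm_num) (by rw [pow_split _ 739]; norm_num)
  have h2 : Real.log ((557940830126698960967415390:ℕ):ℝ) ≤ Real.log n :=
    Real.log_le_log (by norm_num) hn
  have hlog : ((739:ℝ)/12) ≤ Real.log n := by
    refine le_trans ?_ h2
    exact_mod_cast h1
  have hb : Real.log ((739:ℝ)/12) ≤ ((33:ℝ)/8) := by
    have := log_ub ((739:ℝ)/12) 33 8 (by norm_num) (by norm_num) (by norm_num)
    exact_mod_cast this
  exact cert n ((739:ℝ)/12) ((33:ℝ)/8) 20 (by norm_num)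
    (le_trans Real.exp_one_lt_d9.le (by norm_num)) hlog hb (by norm_num)

private lemma certM21 (n : ℕ) (h : V 21 ≤ n) :
    (21:ℝ) < 1.3841 * Real.log n / Real.log (Real.log n) := by
  have hVk : V 21 = 40729680599249024150621323470 := by decide
  have hn : ((40729680599249024150621323470:ℕ):ℝ) ≤ (n:ℝ) := by exact_mod_cast hVk ▸ h
  have h1 := log_lb 40729680599249024150621323470 527 8 (by norm_num) (by norm_num) (by rw [pow_split _ 527]; norm_num)
  have h2 : Real.log ((40729680599249024150621323470:ℕ):ℝ) ≤ Real.log n :=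
    Real.log_le_log (by norm_num) hn
  have hlog : ((527:ℝ)/8) ≤ Real.log n := by
    refine le_trans ?_ h2
    exact_mod_cast h1
  have hb : Real.log ((527:ℝ)/8) ≤ ((21:ℝ)/5) := by
    have := log_ub ((527:ℝ)/8) 21 5 (by norm_num) (by norm_num) (by norm_num)
    exact_mod_cast this
  exact cert n ((527:ℝ)/8) ((21:ℝ)/5) 21 (by norm_num)
    (le_trans Real.exp_one_lt_d9.le (by norm_num)) hlog hb (by norm_num)

private lemma certM22 (n : ℕ) (h : V 22 ≤ n) :
    (22:ℝ) < 1.3841 * Real.log n / Real.log (Real.log n) := by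
  have hVk : V 22 = 3217644767340672907899084554130 := by decide
  have hn : ((3217644767340672907899084554130:ℕ):ℝ) ≤ (n:ℝ) := by exact_mod_cast hVk ▸ h
  have h1 := log_lb 3217644767340672907899084554130 1194 17 (by norm_num) (by norm_num) (by rw [pow_split _ 1194]; norm_num)
  have h2 : Real.log ((3217644767340672907899084554130:ℕ):ℝ) ≤ Real.log n :=
    Real.log_le_log (by norm_num) hn
  have hlog : ((1194:ℝ)/17) ≤ Real.log n := by
    refine le_trans ?_ h2
    exact_mod_cast h1
  have hb : Real.log ((1194:ℝ)/17) ≤ ((81:ℝ)/19) := by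
    have := log_ub ((1194:ℝ)/17) 81 19 (by norm_num) (by norm_num) (by norm_num)
    exact_mod_cast this
  exact cert n ((1194:ℝ)/17) ((81:ℝ)/19) 22 (by norm_num)
    (le_trans Real.exp_one_lt_d9.le (by norm_num)) hlog hb (by norm_num)

private lemma certM23 (n : ℕ) (h : V 23 ≤ n) :
    (23:ℝ) < 1.3841 * Real.log n / Real.log (Real.log n) := by
  have hVk : V 23 = 267064515689275851355624017992790 := by decide
  have hn : ((267064515689275851355624017992790:ℕ):ℝ) ≤ (n:ℝ) := by exact_mod_cast hVk ▸ h
  have h1 := log_lb 267064515689275851355624017992790 1493 20 (by norm_num) (by norm_num) (by rw [pow_split _ 1493]; norm_num)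
  have h2 : Real.log ((267064515689275851355624017992790:ℕ):ℝ) ≤ Real.log n :=
    Real.log_le_log (by norm_num) hn
  have hlog : ((1493:ℝ)/20) ≤ Real.log n := by
    refine le_trans ?_ h2
    exact_mod_cast h1
  have hb : Real.log ((1493:ℝ)/20) ≤ ((82:ℝ)/19) := by
    have := log_ub ((1493:ℝ)/20) 82 19 (by norm_num) (by norm_num) (by norm_num)
    exact_mod_cast this
  exact cert n ((1493:ℝ)/20) ((82:ℝ)/19) 23 (by norm_num)
    (le_trans Real.exp_one_lt_d9.le (by norm_num)) hlog hb (by norm_num)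

private lemma certM24 (n : ℕ) (h : V 24 ≤ n) :
    (24:ℝ) < 1.3841 * Real.log n / Real.log (Real.log n) := by
  have hVk : V 24 = 23768741896345550770650537601358310 := by decide
  have hn : ((23768741896345550770650537601358310:ℕ):ℝ) ≤ (n:ℝ) := by exact_mod_cast hVk ▸ h
  have h1 := log_lb 23768741896345550770650537601358310 1583 20 (by norm_num) (by norm_num) (by rw [pow_split _ 1583]; norm_num)
  have h2 : Real.log ((23768741896345550770650537601358310:ℕ):ℝ) ≤ Real.log n :=
    Real.log_le_log (by norm_num) hn
  have hlog : ((1583:ℝ)/20) ≤ Real.log n := by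
    refine le_trans ?_ h2
    exact_mod_cast h1
  have hb : Real.log ((1583:ℝ)/20) ≤ ((35:ℝ)/8) := by
    have := log_ub ((1583:ℝ)/20) 35 8 (by norm_num) (by norm_num) (by norm_num)
    exact_mod_cast this
  exact cert n ((1583:ℝ)/20) ((35:ℝ)/8) 24 (by norm_num)
    (le_trans Real.exp_one_lt_d9.le (by norm_num)) hlog hb (by norm_num)

private lemma certM25 (n : ℕ) (h : V 25 ≤ n) :
    (25:ℝ) < 1.3841 * Real.log n / Real.log (Real.log n) := by
  have hVk : V 25 = 2305567963945518424753102147331756070 := by decide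
  have hn : ((2305567963945518424753102147331756070:ℕ):ℝ) ≤ (n:ℝ) := by exact_mod_cast hVk ▸ h
  have h1 := log_lb 2305567963945518424753102147331756070 921 11 (by norm_num) (by norm_num) (by rw [pow_split _ 921]; norm_num)
  have h2 : Real.log ((2305567963945518424753102147331756070:ℕ):ℝ) ≤ Real.log n :=
    Real.log_le_log (by norm_num) hn
  have hlog : ((921:ℝ)/11) ≤ Real.log n := by
    refine le_trans ?_ h2
    exact_mod_cast h1
  have hb : Real.log ((921:ℝ)/11) ≤ ((31:ℝ)/7) := by
    have := log_ub ((921:ℝ)/11) 31 7 (by norm_num) (by norm_num) (by norm_num)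
    exact_mod_cast this
  exact cert n ((921:ℝ)/11) ((31:ℝ)/7) 25 (by norm_num)
    (le_trans Real.exp_one_lt_d9.le (by norm_num)) hlog hb (by norm_num)

private lemma certM26 (n : ℕ) (h : V 26 ≤ n) :
    (26:ℝ) < 1.3841 * Real.log n / Real.log (Real.log n) := by
  have hVk : V 26 = 232862364358497360900063316880507363070 := by decide
  have hn : ((232862364358497360900063316880507363070:ℕ):ℝ) ≤ (n:ℝ) := by exact_mod_cast hVk ▸ h
  have h1 := log_lb 232862364358497360900063316880507363070 265 3 (by norm_num) (by norm_num) (by rw [pow_split _ 265]; norm_num)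
  have h2 : Real.log ((232862364358497360900063316880507363070:ℕ):ℝ) ≤ Real.log n :=
    Real.log_le_log (by norm_num) hn
  have hlog : ((265:ℝ)/3) ≤ Real.log n := by
    refine le_trans ?_ h2
    exact_mod_cast h1
  have hb : Real.log ((265:ℝ)/3) ≤ ((9:ℝ)/2) := by
    have := log_ub ((265:ℝ)/3) 9 2 (by norm_num) (by norm_num) (by norm_num)
    exact_mod_cast this
  exact cert n ((265:ℝ)/3) ((9:ℝ)/2) 26 (by norm_num)
    (le_trans Real.exp_one_lt_d9.le (by norm_num)) hlog hb (by norm_num)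

private lemma certM27 (n : ℕ) (h : V 27 ≤ n) :
    (27:ℝ) < 1.3841 * Real.log n / Real.log (Real.log n) := by
  have hVk : V 27 = 23984823528925228172706521638692258396210 := by decide
  have hn : ((23984823528925228172706521638692258396210:ℕ):ℝ) ≤ (n:ℝ) := by exact_mod_cast hVk ▸ h
  have h1 := log_lb 23984823528925228172706521638692258396210 1859 20 (by norm_num) (by norm_num) (by rw [pow_split _ 1859]; norm_num)
  have h2 : Real.log ((23984823528925228172706521638692258396210:ℕ):ℝ) ≤ Real.log n :=
    Real.log_le_log (by norm_num) hn
  have hlog : ((1859:ℝ)/20) ≤ Real.log n := by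
    refine le_trans ?_ h2
    exact_mod_cast h1
  have hb : Real.log ((1859:ℝ)/20) ≤ ((68:ℝ)/15) := by
    have := log_ub ((1859:ℝ)/20) 68 15 (by norm_num) (by norm_num) (by norm_num)
    exact_mod_cast this
  exact cert n ((1859:ℝ)/20) ((68:ℝ)/15) 27 (by norm_num)
    (le_trans Real.exp_one_lt_d9.le (by norm_num)) hlog hb (by norm_num)

private lemma certM28 (n : ℕ) (h : V 28 ≤ n) :
    (28:ℝ) < 1.3841 * Real.log n / Real.log (Real.log n) := by
  have hVk : V 28 = 2566376117594999414479597815340071648394470 := by decide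
  have hn : ((2566376117594999414479597815340071648394470:ℕ):ℝ) ≤ (n:ℝ) := by exact_mod_cast hVk ▸ h
  have h1 := log_lb 2566376117594999414479597815340071648394470 1953 20 (by norm_num) (by norm_num) (by rw [pow_split _ 1953]; norm_num)
  have h2 : Real.log ((2566376117594999414479597815340071648394470:ℕ):ℝ) ≤ Real.log n :=
    Real.log_le_log (by norm_num) hn
  have hlog : ((1953:ℝ)/20) ≤ Real.log n := by
    refine le_trans ?_ h2
    exact_mod_cast h1
  have hb : Real.log ((1953:ℝ)/20) ≤ ((55:ℝ)/12) := by
    have := log_ub ((1953:ℝ)/20) 55 12 (by norm_num) (by norm_num) (by norm_num)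
    exact_mod_cast this
  exact cert n ((1953:ℝ)/20) ((55:ℝ)/12) 28 (by norm_num)
    (le_trans Real.exp_one_lt_d9.le (by norm_num)) hlog hb (by norm_num)

private lemma certM29 (n : ℕ) (h : V 29 ≤ n) :
    (29:ℝ) < 1.3841 * Real.log n / Real.log (Real.log n) := by
  have hVk : V 29 = 279734996817854936178276161872067809674997230 := by decide
  have hn : ((279734996817854936178276161872067809674997230:ℕ):ℝ) ≤ (n:ℝ) := by exact_mod_cast hVk ▸ h
  have h1 := log_lb 279734996817854936178276161872067809674997230 307 3 (by norm_num) (by norm_num) (by rw [pow_split _ 307]; norm_num)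
  have h2 : Real.log ((279734996817854936178276161872067809674997230:ℕ):ℝ) ≤ Real.log n :=
    Real.log_le_log (by norm_num) hn
  have hlog : ((307:ℝ)/3) ≤ Real.log n := by
    refine le_trans ?_ h2
    exact_mod_cast h1
  have hb : Real.log ((307:ℝ)/3) ≤ ((88:ℝ)/19) := by
    have := log_ub ((307:ℝ)/3) 88 19 (by norm_num) (by norm_num) (by norm_num)
    exact_mod_cast this
  exact cert n ((307:ℝ)/3) ((88:ℝ)/19) 29 (by norm_num)
    (le_trans Real.exp_one_lt_d9.le (by norm_num)) hlog hb (by norm_num)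


theorem omega_lt (n : ℕ) (hn : 3 ≤ n) :
    (n.primeFactors.card : ℝ) <
      1.3841 * Real.log n / Real.log (Real.log n) := by
  have hn0 : 0 < n := by omega
  set k := n.primeFactors.card with hkdef
  have hVn : V k ≤ n := by
    have h1 : V k ≤ ∏ p ∈ n.primeFactors, p :=
      V_le_prod k n.primeFactors hkdef.symm (fun p hp => Nat.prime_of_mem_primeFactors hp)
    exact le_trans h1 (Nat.le_of_dvd hn0 (Nat.prod_primeFactors_dvd n))
  rcases Nat.lt_or_ge k 4 with h4 | h4
  · -- k ≤ 3 : use log t ≤ t / e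
    have hk3 : (k:ℝ) ≤ 3 := by exact_mod_cast Nat.lt_succ_iff.mp h4
    have hk0 : (0:ℝ) ≤ (k:ℝ) := by positivity
    have h3n : (3:ℝ) ≤ (n:ℝ) := by exact_mod_cast hn
    set t := Real.log n with htdef
    have ht1 : 1 < t := by
      rw [htdef, Real.lt_log_iff_exp_lt (by linarith)]
      calc Real.exp 1 < 2.7182818286 := Real.exp_one_lt_d9
      _ ≤ (n:ℝ) := by linarith
    have ht0 : (0:ℝ) < t := by linarith
    have hlt0 : 0 < Real.log t := Real.log_pos ht1
    have he0 : (0:ℝ) < Real.exp 1 := Real.exp_pos 1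
    have hs : Real.log (t / Real.exp 1) ≤ t / Real.exp 1 - 1 :=
      Real.log_le_sub_one_of_pos (by positivity)
    have hsd : Real.log (t / Real.exp 1) = Real.log t - 1 := by
      rw [Real.log_div (by linarith) (by positivity), Real.log_exp]
    have hlogt : Real.log t * Real.exp 1 ≤ t := by
      have h' : Real.log t ≤ t / Real.exp 1 := by linarith
      calc Real.log t * Real.exp 1 ≤ (t / Real.exp 1) * Real.exp 1 :=
        mul_le_mul_of_nonneg_right h' he0.le
      _ = t := by field_simp
    have he9 : (2.7182818283:ℝ) < Real.exp 1 := Real.exp_one_gt_d9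
    rw [lt_div_iff₀ hlt0]
    have hx : Real.log t * 2.7182818283 < t := by
      nlinarith [mul_lt_mul_of_pos_left he9 hlt0]
    have hk' : (k:ℝ) * Real.log t ≤ 3 * Real.log t :=
      mul_le_mul_of_nonneg_right hk3 hlt0.le
    linarith [hx, hk', ht0]
  rcases Nat.lt_or_ge k 30 with h30 | h30
  · interval_cases k <;>
      first
      | exact certM4 n hVn | exact certM5 n hVn | exact certM6 n hVn | exact certM7 n hVn
      | exact certM8 n hVn | exact certM9 n hVn | exact certM10 n hVn | exact certM11 n hVn
      | exact certM12 n hVn | exact certM13 n hVn | exact certM14 n hVn | exact certM15 n hVn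
      | exact certM16 n hVn | exact certM17 n hVn | exact certM18 n hVn | exact certM19 n hVn
      | exact certM20 n hVn | exact certM21 n hVn | exact certM22 n hVn | exact certM23 n hVn
      | exact certM24 n hVn | exact certM25 n hVn | exact certM26 n hVn | exact certM27 n hVn
      | exact certM28 n hVn | exact certM29 n hVn
  · exact tail_lemma n k h30 hVn
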